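/- arXiv:2401.05523 — 2 statements merged into one kernel-verified Lean document; each statement's English description precedes it below -/
import Mathlib

section
/- A graph G has the property that every induced subgraph of G is a König-Egerváry graph if and only if G is bipartite. -/
open SimpleGraph

variable {V : Type*}

/-- A set of vertices is independent: no two of its vertices are adjacent. -/
def IsIndep (G : SimpleGraph V) (s : Set V) : Prop :=
  s.Pairwise fun a b => ¬ G.Adj a b

/-- The independence number α(G). -/
noncomputable def alphaNum (G : SimpleGraph V) : ℕ :=
  sSup {n | ∃ s : Set V, IsIndep G s ∧ s.ncard = n}

/-- The matching number μ(G). -/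
noncomputable def muNum (G : SimpleGraph V) : ℕ :=
  sSup {n | ∃ M : SimpleGraph.Subgraph G, M.IsMatching ∧ M.edgeSet.ncard = n}

/-- The neighborhood N(A) of a set of vertices. -/
def nbhd (G : SimpleGraph V) (A : Set V) : Set V := {v | ∃ a ∈ A, G.Adj a v}

/-- The difference d(A) = |A| - |N(A)| of a set of vertices. -/
noncomputable def diffSet (G : SimpleGraph V) (A : Set V) : ℤ :=
  (A.ncard : ℤ) - (nbhd G A).ncard

/-- The critical difference d(G). -/
noncomputable def critDiff (G : SimpleGraph V) : ℤ :=
  sSup {d | ∃ I : Set V, IsIndep G I ∧ diffSet G I = d}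

/-- A critical independent set: an independent set attaining the critical difference. -/
def IsCriticalIndep (G : SimpleGraph V) (A : Set V) : Prop :=
  IsIndep G A ∧ diffSet G A = critDiff G

/-- ker(G): the intersection of all critical independent sets. -/
noncomputable def kerSet (G : SimpleGraph V) : Set V :=
  ⋂₀ {A | IsCriticalIndep G A}

/-- A maximum independent set. -/
noncomputable def IsMaxIndep (G : SimpleGraph V) (S : Set V) : Prop :=
  IsIndep G S ∧ S.ncard = alphaNum G

/-- core(G): the intersection of all maximum independent sets. -/
noncomputable def coreSet (G : SimpleGraph V) : Set V :=
  ⋂₀ {S | IsMaxIndep G S}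

/-- A König–Egerváry graph: α(G) + μ(G) = n(G). -/
def KonigEgervary (G : SimpleGraph V) : Prop :=
  alphaNum G + muNum G = Nat.card V

section Basic
variable [Finite V] (G : SimpleGraph V)

lemma alpha_bdd : BddAbove {n | ∃ s : Set V, IsIndep G s ∧ s.ncard = n} := by
  refine ⟨Nat.card V, fun n hn => ?_⟩
  obtain ⟨s, -, rfl⟩ := hn
  simpa [Set.ncard_univ] using Set.ncard_le_ncard (Set.subset_univ s) Set.finite_univ

lemma alpha_spec : ∃ s : Set V, IsIndep G s ∧ s.ncard = alphaNum G := by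
  have : alphaNum G ∈ {n | ∃ s : Set V, IsIndep G s ∧ s.ncard = n} :=
    Nat.sSup_mem ⟨0, ∅, by simp [IsIndep], by simp⟩ (alpha_bdd G)
  exact this

lemma le_alpha {s : Set V} (h : IsIndep G s) : s.ncard ≤ alphaNum G :=
  le_csSup (alpha_bdd G) ⟨s, h, rfl⟩

lemma mu_bdd : BddAbove {n | ∃ M : SimpleGraph.Subgraph G, M.IsMatching ∧ M.edgeSet.ncard = n} := by
  refine ⟨Nat.card (Sym2 V), fun n hn => ?_⟩
  obtain ⟨M, -, rfl⟩ := hn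
  simpa [Set.ncard_univ] using Set.ncard_le_ncard (Set.subset_univ M.edgeSet) Set.finite_univ

lemma mu_spec : ∃ M : SimpleGraph.Subgraph G, M.IsMatching ∧ M.edgeSet.ncard = muNum G := by
  have : muNum G ∈ {n | ∃ M : SimpleGraph.Subgraph G, M.IsMatching ∧ M.edgeSet.ncard = n} :=
    Nat.sSup_mem ⟨0, ⊥, by intro v hv; simp at hv, by simp⟩ (mu_bdd G)
  exact this

lemma le_mu {M : SimpleGraph.Subgraph G} (h : M.IsMatching) : M.edgeSet.ncard ≤ muNum G :=
  le_csSup (mu_bdd G) ⟨M, h, rfl⟩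

end Basic

lemma matching_edge_eq {G : SimpleGraph V} {M : Subgraph G} (hM : M.IsMatching)
    {e f : Sym2 V} (he : e ∈ M.edgeSet) (hf : f ∈ M.edgeSet) {u : V}
    (hue : u ∈ e) (huf : u ∈ f) : e = f := by
  obtain ⟨x, rfl⟩ := Sym2.mem_iff_exists.mp hue
  obtain ⟨y, rfl⟩ := Sym2.mem_iff_exists.mp huf
  rw [Subgraph.mem_edgeSet] at he hf
  rw [(hM (M.edge_vert he)).unique he hf]

lemma exists_matching_of_pairing (G : SimpleGraph V) (s : Set V) (p : V → V)
    (hadj : ∀ a ∈ s, G.Adj a (p a)) (hinj : Set.InjOn p s)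
    (hdis : ∀ a ∈ s, p a ∉ s) :
    ∃ M : Subgraph G, M.IsMatching ∧ M.edgeSet.ncard = s.ncard := by
  refine ⟨⟨s ∪ p '' s, fun x y => (x ∈ s ∧ p x = y) ∨ (y ∈ s ∧ p y = x), ?_, ?_, ?_⟩, ?_, ?_⟩
  · rintro x y (⟨hx, rfl⟩ | ⟨hy, rfl⟩)
    · exact hadj x hx
    · exact (hadj y hy).symm
  · rintro x y (⟨hx, -⟩ | ⟨hy, rfl⟩)
    · exact Or.inl hx
    · exact Or.inr ⟨y, hy, rfl⟩
  · exact ⟨fun x y h => by tauto⟩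
  · rintro v (hv | ⟨a, ha, rfl⟩)
    · refine ⟨p v, Or.inl ⟨hv, rfl⟩, ?_⟩
      rintro y (⟨-, rfl⟩ | ⟨hy, hpy⟩)
      · rfl
      · exact absurd (hpy ▸ hv) (hdis y hy)
    · refine ⟨a, Or.inr ⟨ha, rfl⟩, ?_⟩
      rintro y (⟨hpa, -⟩ | ⟨hy, hpy⟩)
      · exact absurd hpa (hdis a ha)
      · exact hinj hy ha hpy
  · have hset : (⟨s ∪ p '' s, fun x y => (x ∈ s ∧ p x = y) ∨ (y ∈ s ∧ p y = x),
        by rintro x y (⟨hx, rfl⟩ | ⟨hy, rfl⟩); exacts [hadj x hx, (hadj y hy).symm],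
        by rintro x y (⟨hx, -⟩ | ⟨hy, rfl⟩); exacts [Or.inl hx, Or.inr ⟨y, hy, rfl⟩],
        ⟨fun x y h => by tauto⟩⟩ : Subgraph G).edgeSet = (fun a => s(a, p a)) '' s := by
      ext e
      induction e with
      | _ x y =>
        simp only [Subgraph.mem_edgeSet, Set.mem_image]
        constructor
        · rintro (⟨hx, rfl⟩ | ⟨hy, rfl⟩)
          · exact ⟨x, hx, rfl⟩
          · exact ⟨y, hy, Sym2.eq_swap⟩
        · rintro ⟨a, ha, he⟩
          rw [Sym2.eq_iff] at he
          rcases he with ⟨rfl, rfl⟩ | ⟨rfl, rfl⟩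
          · exact Or.inl ⟨ha, rfl⟩
          · exact Or.inr ⟨ha, rfl⟩
    rw [hset]
    refine Set.ncard_image_of_injOn ?_
    intro a ha b hb hab
    rw [Sym2.eq_iff] at hab
    rcases hab with ⟨rfl, -⟩ | ⟨h1, -⟩
    · rfl
    · exact absurd (h1 ▸ ha) (hdis b hb)

section C
variable {G : SimpleGraph V} {M : Subgraph G}

lemma matching_edge_eq' (hM : M.IsMatching)
    {e f : Sym2 V} (he : e ∈ M.edgeSet) (hf : f ∈ M.edgeSet) {u : V}
    (hue : u ∈ e) (huf : u ∈ f) : e = f := by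
  obtain ⟨x, rfl⟩ := Sym2.mem_iff_exists.mp hue
  obtain ⟨y, rfl⟩ := Sym2.mem_iff_exists.mp huf
  rw [Subgraph.mem_edgeSet] at he hf
  rw [(hM (M.edge_vert he)).unique he hf]

lemma two_mul_ncard_edgeSet_le [Finite V] (hM : M.IsMatching) :
    2 * M.edgeSet.ncard ≤ Nat.card V := by
  have hrep : ∀ e : M.edgeSet, ∃ pq : V × V, (e : Sym2 V) = s(pq.1, pq.2) := by
    rintro ⟨e, he⟩
    induction e with
    | _ x y => exact ⟨(x, y), rfl⟩
  choose pq hpq using hrep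
  have hmem1 : ∀ e : M.edgeSet, (pq e).1 ∈ (e : Sym2 V) := fun e => by
    rw [hpq e]; exact Sym2.mem_mk_left _ _
  have hmem2 : ∀ e : M.edgeSet, (pq e).2 ∈ (e : Sym2 V) := fun e => by
    rw [hpq e]; exact Sym2.mem_mk_right _ _
  have hne : ∀ e : M.edgeSet, (pq e).1 ≠ (pq e).2 := by
    intro e h
    have he : (e : Sym2 V) ∈ M.edgeSet := e.2
    rw [hpq e, Subgraph.mem_edgeSet] at he
    exact (M.adj_sub he).ne h
  have hF : Function.Injective (fun x : M.edgeSet × Bool =>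
      if x.2 then (pq x.1).1 else (pq x.1).2) := by
    rintro ⟨e, b⟩ ⟨f, c⟩ h
    simp only at h
    have hee : e = f := by
      apply Subtype.ext
      refine matching_edge_eq' hM e.2 f.2 (u := if b then (pq e).1 else (pq e).2) ?_ ?_
      · cases b <;> simp [hmem1, hmem2]
      · rw [h]; cases c <;> simp [hmem1, hmem2]
    subst hee
    suffices hbc : b = c by rw [hbc]
    cases b <;> cases c <;> simp at h <;>
      first | rfl | exact absurd h (hne e) | exact absurd h.symm (hne e)
  have := Nat.card_le_card_of_injective _ hF
  rw [Nat.card_prod, Nat.card_coe_set_eq, Nat.card_eq_fintype_card,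
    Fintype.card_bool] at this
  omega
end C

lemma alpha_mu_le [Finite V] (G : SimpleGraph V) :
    alphaNum G + muNum G ≤ Nat.card V := by
  obtain ⟨S, hS, hScard⟩ := alpha_spec G
  obtain ⟨M, hM, hMcard⟩ := mu_spec G
  have hrep : ∀ e : M.edgeSet, ∃ u, u ∈ (e : Sym2 V) ∧ u ∉ S := by
    rintro ⟨e, he⟩
    induction e with
    | _ x y =>
      rw [Subgraph.mem_edgeSet] at he
      have hadj := M.adj_sub he
      by_contra hcon
      push_neg at hcon
      have hx := hcon x (Sym2.mem_mk_left _ _)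
      have hy := hcon y (Sym2.mem_mk_right _ _)
      exact hS hx hy hadj.ne hadj
  choose g hg1 hg2 using hrep
  have hginj : Function.Injective (fun e : M.edgeSet => (⟨g e, hg2 e⟩ : (Sᶜ : Set V))) := by
    intro e f h
    simp only [Subtype.mk_eq_mk] at h
    exact Subtype.ext (matching_edge_eq' hM e.2 f.2 (hg1 e) (h ▸ hg1 f))
  have hcard := Nat.card_le_card_of_injective _ hginj
  rw [Nat.card_coe_set_eq, Nat.card_coe_set_eq] at hcard
  have := Set.ncard_add_ncard_compl S
  omega
lemma bipartite_lower [Finite V] (G : SimpleGraph V) (c : G.Coloring Bool) :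
    Nat.card V ≤ alphaNum G + muNum G := by
  classical
  haveI : Fintype V := Fintype.ofFinite V
  classical
  set A := {w : V // c w = true} with hA
  set B := {w : V // c w = false} with hB
  let N : Finset A → Finset B := fun s => Finset.univ.filter (fun b => ∃ a ∈ s, G.Adj a.1 b.1)
  obtain ⟨st, -, hst⟩ := Finset.exists_max_image (Finset.univ : Finset (Finset A))
      (fun s => (s.card : ℤ) - ((N s).card : ℤ)) ⟨∅, Finset.mem_univ _⟩
  have hN0 : N ∅ = ∅ := by simp [N]
  have hd0 : (0 : ℤ) ≤ (st.card : ℤ) - ((N st).card : ℤ) := by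
    have := hst ∅ (Finset.mem_univ _)
    rw [hN0] at this
    simpa using this
  set d : ℕ := ((st.card : ℤ) - ((N st).card : ℤ)).toNat with hd
  have hdZ : (d : ℤ) = (st.card : ℤ) - ((N st).card : ℤ) := Int.toNat_of_nonneg hd0
  have hdn : d + (N st).card = st.card := by omega
  let t : A → Finset (B ⊕ Fin d) := fun a =>
    ((Finset.univ.filter (fun b : B => G.Adj a.1 b.1)).map ⟨Sum.inl, Sum.inl_injective⟩) ∪
      (Finset.univ.map ⟨Sum.inr, Sum.inr_injective⟩)
  have hall : ∀ s : Finset A, s.card ≤ (s.biUnion t).card := by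
    intro s
    rcases s.eq_empty_or_nonempty with rfl | ⟨a0, ha0⟩
    · simp
    have hsub : ((N s).map ⟨Sum.inl, Sum.inl_injective⟩ ∪
        (Finset.univ.map ⟨Sum.inr, Sum.inr_injective⟩) : Finset (B ⊕ Fin d)) ⊆ s.biUnion t := by
      intro x hx
      rw [Finset.mem_union] at hx
      rcases hx with hx | hx
      · obtain ⟨b, hb, rfl⟩ := Finset.mem_map.mp hx
        obtain ⟨a, ha, hadj⟩ := by
          have := Finset.mem_filter.mp hb
          exact this.2
        exact Finset.mem_biUnion.mpr ⟨a, ha, Finset.mem_union_left _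
          (Finset.mem_map_of_mem _ (Finset.mem_filter.mpr ⟨Finset.mem_univ _, hadj⟩))⟩
      · exact Finset.mem_biUnion.mpr ⟨a0, ha0, Finset.mem_union_right _ hx⟩
    have hdisj : Disjoint ((N s).map ⟨Sum.inl, Sum.inl_injective⟩)
        ((Finset.univ : Finset (Fin d)).map ⟨Sum.inr, Sum.inr_injective⟩) := by
      rw [Finset.disjoint_left]
      rintro x hx hx'
      obtain ⟨b, -, rfl⟩ := Finset.mem_map.mp hx
      obtain ⟨j, -, hj⟩ := Finset.mem_map.mp hx'
      exact Sum.inl_ne_inr hj.symm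
    have hcard : ((N s).map ⟨Sum.inl, Sum.inl_injective⟩ ∪
        (Finset.univ.map ⟨Sum.inr, Sum.inr_injective⟩) : Finset (B ⊕ Fin d)).card
        = (N s).card + d := by
      rw [Finset.card_union_of_disjoint hdisj, Finset.card_map, Finset.card_map]
      simp
    have hle : s.card ≤ (N s).card + d := by
      have := hst s (Finset.mem_univ _)
      omega
    calc s.card ≤ (N s).card + d := hle
      _ = _ := hcard.symm
      _ ≤ (s.biUnion t).card := Finset.card_le_card hsub
  obtain ⟨f, hfinj, hft⟩ := (Finset.all_card_le_biUnion_card_iff_exists_injective t).mp hall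
  have hfadj : ∀ (a : A) (b : B), f a = Sum.inl b → G.Adj a.1 b.1 := by
    intro a b hab
    have := hft a
    rw [hab] at this
    rcases Finset.mem_union.mp this with h | h
    · obtain ⟨b', hb', hbe⟩ := Finset.mem_map.mp h
      cases Sum.inl_injective hbe
      exact (Finset.mem_filter.mp hb').2
    · obtain ⟨j, -, hj⟩ := Finset.mem_map.mp h
      exact absurd hj.symm Sum.inl_ne_inr
  -- the matched part of A
  set T1 : Set A := {a | ∃ b, f a = Sum.inl b} with hT1def
  have hT2 : T1ᶜ.ncard ≤ d := by
    have hj : ∀ a : A, a ∈ T1ᶜ → ∃ j : Fin d, f a = Sum.inr j := by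
      intro a ha
      rcases hfa : f a with b | j
      · exact absurd ⟨b, hfa⟩ ha
      · exact ⟨j, rfl⟩
    choose jf hjf using hj
    have hinj : Function.Injective (fun p : ↥(T1ᶜ) => jf p.1 p.2) := by
      rintro ⟨a, ha⟩ ⟨a', ha'⟩ h
      simp only at h
      refine Subtype.ext (hfinj ?_)
      rw [hjf a ha, hjf a' ha', h]
    have := Nat.card_le_card_of_injective _ hinj
    rwa [Nat.card_coe_set_eq, Nat.card_eq_fintype_card, Fintype.card_fin] at this
  have hT12 : T1.ncard + T1ᶜ.ncard = Nat.card A := Set.ncard_add_ncard_compl T1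
  -- build the pairing
  have hbf : ∀ a : A, a ∈ T1 → ∃ b : B, f a = Sum.inl b := fun a ha => ha
  choose bf hbf using hbf
  set sV : Set V := Subtype.val '' T1 with hsVdef
  set p : V → V := fun w =>
    if h : ∃ a : A, a ∈ T1 ∧ (a : V) = w then (bf h.choose h.choose_spec.1 : V) else w
    with hpdef
  have hpspec : ∀ (a : A) (ha : a ∈ T1), p (a : V) = (bf a ha : V) := by
    intro a ha
    have h : ∃ a' : A, a' ∈ T1 ∧ (a' : V) = (a : V) := ⟨a, ha, rfl⟩
    have he : h.choose = a := Subtype.ext h.choose_spec.2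
    have : f h.choose = f a := congrArg f he
    rw [hbf h.choose h.choose_spec.1, hbf a ha] at this
    have hbb : bf h.choose h.choose_spec.1 = bf a ha := Sum.inl_injective this
    rw [hpdef]
    simp only [dif_pos h]
    rw [hbb]
  have hadjp : ∀ w ∈ sV, G.Adj w (p w) := by
    rintro w ⟨a, ha, rfl⟩
    rw [hpspec a ha]
    exact hfadj a (bf a ha) (hbf a ha)
  have hpB : ∀ w ∈ sV, c (p w) = false := by
    rintro w ⟨a, ha, rfl⟩
    rw [hpspec a ha]
    exact (bf a ha).2
  have hpnotin : ∀ w ∈ sV, p w ∉ sV := by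
    intro w hw hcon
    obtain ⟨a', -, he⟩ := hcon
    have h1 : c (p w) = true := he ▸ a'.2
    rw [hpB w hw] at h1
    exact Bool.false_ne_true h1
  have hpinj : Set.InjOn p sV := by
    rintro w ⟨a, ha, rfl⟩ w' ⟨a', ha', rfl⟩ h
    rw [hpspec a ha, hpspec a' ha'] at h
    have : bf a ha = bf a' ha' := Subtype.ext h
    have : f a = f a' := by rw [hbf a ha, hbf a' ha', this]
    exact congrArg Subtype.val (hfinj this)
  have hsVcard : sV.ncard = T1.ncard := Set.ncard_image_of_injective _ Subtype.val_injective
  -- the independent set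
  set NbrV : Set V := Subtype.val '' (↑(N st) : Set B) with hNbrVdef
  set Bset : Set V := {w | c w = false} with hBsetdef
  set Iset : Set V := (Subtype.val '' (↑st : Set A)) ∪ (Bset \ NbrV) with hIdef
  have hNbrVsub : NbrV ⊆ Bset := by rintro w ⟨b, -, rfl⟩; exact b.2
  have hIindep : IsIndep G Iset := by
    rintro x hx y hy hne hadj
    have hcol := c.valid hadj
    have hxt : x ∈ Subtype.val '' (↑st : Set A) → c x = true := by rintro ⟨a, -, rfl⟩; exact a.2
    have hyt : y ∈ Subtype.val '' (↑st : Set A) → c y = true := by rintro ⟨a, -, rfl⟩; exact a.2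
    rcases hx with hx | hx <;> rcases hy with hy | hy
    · exact hcol (by rw [hxt hx, hyt hy])
    · obtain ⟨a, hast, rfl⟩ := hx
      exact hy.2 ⟨⟨y, hy.1⟩, Finset.mem_coe.mpr (Finset.mem_filter.mpr
        ⟨Finset.mem_univ _, a, hast, hadj⟩), rfl⟩
    · obtain ⟨a, hast, rfl⟩ := hy
      exact hx.2 ⟨⟨x, hx.1⟩, Finset.mem_coe.mpr (Finset.mem_filter.mpr
        ⟨Finset.mem_univ _, a, hast, hadj.symm⟩), rfl⟩
    · exact hcol (by rw [hx.1, hy.1])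
  have hIcard : Iset.ncard = st.card + (Bset.ncard - NbrV.ncard) := by
    rw [hIdef, Set.ncard_union_eq ?_ (Set.toFinite _) (Set.toFinite _)]
    · rw [Set.ncard_image_of_injective _ Subtype.val_injective, Set.ncard_coe_finset,
        Set.ncard_diff hNbrVsub (Set.toFinite _)]
    · rw [Set.disjoint_left]
      rintro w ⟨a, -, rfl⟩ hw
      have h1 : c a = false := hw.1
      rw [a.2] at h1
      simp at h1
  have hNbrVcard : NbrV.ncard = (N st).card := by
    rw [hNbrVdef, Set.ncard_image_of_injective _ Subtype.val_injective, Set.ncard_coe_finset]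
  have hBsetcard : Bset.ncard = Nat.card B := by
    rw [← Nat.card_coe_set_eq]
    exact Nat.card_congr (Equiv.subtypeEquivRight fun _ => Iff.rfl)
  have hNB : (N st).card ≤ Nat.card B := by
    rw [Nat.card_eq_fintype_card]
    exact Finset.card_le_card (Finset.subset_univ _)
  have hABV : Nat.card A + Nat.card B = Nat.card V := by
    have hcompl : {w : V | c w = true}ᶜ = {w : V | c w = false} := by
      ext w; simp
    have h1 : Nat.card A = {w : V | c w = true}.ncard := (Nat.card_coe_set_eq _).symm
    have h2 : Nat.card B = {w : V | c w = false}.ncard := (Nat.card_coe_set_eq _).symm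
    rw [h1, h2, ← hcompl]
    exact Set.ncard_add_ncard_compl _
  -- matching bound
  obtain ⟨M, hMm, hMcard⟩ := exists_matching_of_pairing G sV p hadjp hpinj hpnotin
  have hmu : sV.ncard ≤ muNum G := hMcard ▸ le_mu G hMm
  have halpha : Iset.ncard ≤ alphaNum G := le_alpha G hIindep
  rw [hIcard, hBsetcard, hNbrVcard] at halpha
  rw [hsVcard] at hmu
  omega

lemma colorable_of_no_odd_closed_walk (G : SimpleGraph V)
    (h : ∀ (u : V) (w : G.Walk u u), ¬ Odd w.length) : G.Colorable 2 := by
  classical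
  have hreach : ∀ v : V, G.Reachable v (G.connectedComponentMk v).out := by
    intro v
    exact (ConnectedComponent.exact (Quot.out_eq (G.connectedComponentMk v))).symm
  have hvalid : ∀ {a b : V}, G.Adj a b →
      ¬ (decide (Odd (hreach a).some.length) = decide (Odd (hreach b).some.length)) := by
    intro a b hadj heq
    have hcomp : (G.connectedComponentMk a) = (G.connectedComponentMk b) :=
      ConnectedComponent.sound hadj.reachable
    have hiff : Odd (hreach a).some.length ↔ Odd (hreach b).some.length :=
      decide_eq_decide.mp heq
    set pa := (hreach a).some with hpa
    set pb := (hreach b).some with hpb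
    have hcast : (G.connectedComponentMk b).out = (G.connectedComponentMk a).out := by
      rw [hcomp]
    apply h a ((Walk.cons hadj (pb.copy rfl hcast)).append pa.reverse)
    have hlen : ((Walk.cons hadj (pb.copy rfl hcast)).append pa.reverse).length
        = 1 + pb.length + pa.length := by
      rw [Walk.length_append, Walk.length_cons, Walk.length_copy, Walk.length_reverse]
      omega
    rw [hlen, Nat.odd_iff]
    rw [Nat.odd_iff, Nat.odd_iff] at hiff
    omega
  have coloring : G.Coloring Bool :=
    Coloring.mk (fun v => decide (Odd (hreach v).some.length)) (fun hadj => hvalid hadj)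
  simpa using coloring.colorable

lemma closed_walk_split {G : SimpleGraph V} {u : V} (w : G.Walk u u)
    (hdup : ¬ w.support.tail.Nodup) :
    ∃ (x : V) (c : G.Walk x x) (w' : G.Walk u u),
      c.length + w'.length = w.length ∧ 1 ≤ c.length ∧ 1 ≤ w'.length := by
  classical
  obtain ⟨d, hd2⟩ : ∃ d, 2 ≤ w.support.tail.count d := by
    by_contra hcon
    push_neg at hcon
    exact hdup (List.nodup_iff_count_le_one.mpr (fun a => by have := hcon a; omega))
  have hdt : d ∈ w.support.tail := by
    rw [← List.count_pos_iff]
    omega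
  have hd_sup : d ∈ w.support := by
    rw [w.support_eq_cons]
    exact List.mem_cons_of_mem _ hdt
  have hspec := w.take_spec hd_sup
  set p := w.takeUntil d hd_sup with hpdef
  have hcount_p : p.support.count d = 1 := w.count_support_takeUntil_eq_one hd_sup
  have hcount_pt : p.support.tail.count d ≤ 1 := by
    have hsub := List.IsSuffix.sublist (List.tail_suffix p.support)
    have := hsub.count_le d
    omega
  have hlen_w : p.length + (w.dropUntil d hd_sup).length = w.length := by
    have := congrArg Walk.length hspec
    rwa [Walk.length_append] at this
  have htail : w.support.tail = p.support.tail ++ (w.dropUntil d hd_sup).support.tail := by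
    have := congrArg Walk.support hspec
    rw [Walk.support_append] at this
    rw [← this, p.support_eq_cons]
    simp [Walk.tail_support_append]
  have hdr : d ∈ (w.dropUntil d hd_sup).support.tail := by
    rw [← List.count_pos_iff]
    rw [htail, List.count_append] at hd2
    omega
  generalize hrgen : w.dropUntil d hd_sup = r at hlen_w htail hdr
  cases r with
  | nil => simp at hdr
  | @cons _ y _ hadj r' =>
      have hdr' : d ∈ r'.support := by
        rwa [Walk.support_cons, List.tail_cons] at hdr
      refine ⟨d, Walk.cons hadj (r'.takeUntil d hdr'), p.append (r'.dropUntil d hdr'), ?_, ?_, ?_⟩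
      · have h2 : r'.length = (r'.takeUntil d hdr').length + (r'.dropUntil d hdr').length := by
          conv_lhs => rw [← r'.take_spec hdr']
          rw [Walk.length_append]
        rw [Walk.length_cons, Walk.length_append]
        rw [Walk.length_cons] at hlen_w
        omega
      · rw [Walk.length_cons]; omega
      · rw [Walk.length_append]
        by_contra hcon
        push_neg at hcon
        have hp0 : p.length = 0 := by omega
        have hq0 : (r'.dropUntil d hdr').length = 0 := by omega
        have hps : p.support.tail = [] := by
          have h1 : p.support.length = p.length + 1 := Walk.length_support p
          rw [p.support_eq_cons] at h1
          simp only [List.length_cons] at h1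
          exact List.eq_nil_of_length_eq_zero (by omega)
        have hqs : (r'.dropUntil d hdr').support.tail = [] := by
          have h1 : (r'.dropUntil d hdr').support.length = (r'.dropUntil d hdr').length + 1 :=
            Walk.length_support _
          rw [(r'.dropUntil d hdr').support_eq_cons] at h1
          simp only [List.length_cons] at h1
          exact List.eq_nil_of_length_eq_zero (by omega)
        have hcount_r : (Walk.cons hadj r').support.tail.count d = 1 := by
          rw [Walk.support_cons, List.tail_cons]
          conv_lhs => rw [← r'.take_spec hdr']
          rw [Walk.support_append, List.count_append, hqs]
          simp only [List.count_nil, Nat.add_zero]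
          exact r'.count_support_takeUntil_eq_one hdr'
        rw [htail, List.count_append, hps, hcount_r] at hd2
        simp at hd2

lemma exists_nodup_odd_closed_walk (G : SimpleGraph V)
    (hex : ∃ (u : V) (w : G.Walk u u), Odd w.length) :
    ∃ (x : V) (w : G.Walk x x), Odd w.length ∧ w.support.tail.Nodup := by
  classical
  have hexn : ∃ n, ∃ (x : V) (w : G.Walk x x), Odd w.length ∧ w.length = n := by
    obtain ⟨u, w, hw⟩ := hex
    exact ⟨w.length, u, w, hw, rfl⟩
  obtain ⟨x, w, hodd, hlen⟩ := Nat.find_spec hexn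
  refine ⟨x, w, hodd, ?_⟩
  by_contra hdup
  obtain ⟨y, cw, w', hsum, hc1, hw1⟩ := closed_walk_split w hdup
  have hor : Odd cw.length ∨ Odd w'.length := by
    rw [Nat.odd_iff] at hodd ⊢
    rw [Nat.odd_iff]
    omega
  rcases hor with h | h
  · have hlt : cw.length < Nat.find hexn := by omega
    exact Nat.find_min hexn hlt ⟨y, cw, h, rfl⟩
  · have hlt : w'.length < Nat.find hexn := by omega
    exact Nat.find_min hexn hlt ⟨x, w', h, rfl⟩

lemma cycle_list_of_closed_walk {G : SimpleGraph V} {x : V} (w : G.Walk x x)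
    (hnd : w.support.tail.Nodup) (hpos : 0 < w.length) :
    ∃ l : List V, l.Nodup ∧ l.length = w.length ∧
      ∀ i (h : i < l.length),
        G.Adj l[i] (l[(i+1) % l.length]'(Nat.mod_lt _ (by omega))) := by
  classical
  have htne : w.support.tail ≠ [] := by
    intro hcon
    have h1 : w.support.length = w.length + 1 := Walk.length_support w
    rw [w.support_eq_cons, hcon] at h1
    simp only [List.length_cons, List.length_nil] at h1
    omega
  have hlastq : w.support.tail.getLast? = some x := by
    have h1 : w.support.getLast? = some x := by
      rw [List.getLast?_eq_getLast_of_ne_nil (w.support_ne_nil)]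
      exact congrArg some (Walk.getLast_support w)
    rw [w.support_eq_cons] at h1
    rcases hc : w.support.tail with _ | ⟨a, t'⟩
    · exact absurd hc htne
    · rw [hc, List.getLast?_cons_cons] at h1
      exact h1
  set t := w.support.tail with htdef
  set l := x :: t.dropLast with hldef
  have ht_decomp : t.dropLast ++ [x] = t := List.dropLast_append_getLast? x hlastq
  have hsupp : w.support = l ++ [x] := by
    rw [w.support_eq_cons, hldef]
    simp only [List.cons_append]
    rw [ht_decomp]
  have hlen : l.length = w.length := by
    have h1 : w.support.length = w.length + 1 := Walk.length_support w
    rw [hsupp] at h1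
    simp only [List.length_append, List.length_singleton] at h1
    omega
  have hnodup : l.Nodup := by
    have h2 : (t.dropLast ++ [x]).Nodup := by rw [ht_decomp]; exact hnd
    rw [List.nodup_append] at h2
    rw [hldef, List.nodup_cons]
    refine ⟨fun hx => ?_, h2.1⟩
    exact h2.2.2 x hx x (List.mem_singleton_self x) rfl
  refine ⟨l, hnodup, hlen, ?_⟩
  have hchain := Walk.isChain_adj_support w
  rw [List.isChain_iff_getElem] at hchain
  have hsl : w.support.length = l.length + 1 := by
    rw [hsupp]; simp
  intro i hi
  have hchl : G.Adj (w.support.get ⟨i, by omega⟩) (w.support.get ⟨i+1, by omega⟩) :=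
    hchain i (by omega)
  have hgl : ∀ (j : ℕ) (hj : j < l.length), w.support.get ⟨j, by omega⟩ = l[j] := by
    intro j hj
    have : w.support.get ⟨j, by omega⟩ = w.support[j]'(by omega) := rfl
    rw [this]
    simp only [hsupp]
    exact List.getElem_append_left hj
  rcases Nat.lt_or_ge (i+1) l.length with h2 | h2
  · have hmod : (i+1) % l.length = i + 1 := Nat.mod_eq_of_lt h2
    have e1 := hgl i hi
    have e2 := hgl (i+1) h2
    rw [e1, e2] at hchl
    simp only [hmod]
    exact hchl
  · have hieq : i + 1 = l.length := by omega
    have e1 := hgl i hi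
    have e2 : w.support.get ⟨i+1, by omega⟩ = x := by
      have : w.support.get ⟨i+1, by omega⟩ = w.support[i+1]'(by omega) := rfl
      rw [this]
      simp only [hsupp]
      rw [List.getElem_append_right (by omega)]
      simp [hieq]
    rw [e1, e2] at hchl
    have hmod : (i+1) % l.length = 0 := by
      rw [hieq, Nat.mod_self]
    have e3 : l[(i+1) % l.length]'(Nat.mod_lt _ (by omega)) = x := by
      simp only [hmod]
      rfl
    rw [e3]
    exact hchl
lemma indep_le_of_cycle_list [Finite V] (G : SimpleGraph V) (l : List V) (hnd : l.Nodup)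
    (hpos : 0 < l.length)
    (hadj : ∀ i (h : i < l.length), G.Adj l[i] (l[(i+1) % l.length]'(Nat.mod_lt _ (by omega))))
    {S : Set V} (hS : IsIndep G S) (hsub : S ⊆ {v | v ∈ l}) :
    2 * S.ncard ≤ l.length := by
  classical
  set n := l.length with hn
  have hmodlt : ∀ i : ℕ, (i + 1) % n < n := fun i => Nat.mod_lt _ (by omega)
  set σ : V → V := fun v =>
    if h : v ∈ l then l[(l.idxOf v + 1) % n]'(hmodlt _) else v with hσ
  have hσl : ∀ v ∈ l, σ v = l[(l.idxOf v + 1) % n]'(hmodlt _) := by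
    intro v hv
    simp only [hσ, dif_pos hv]
  have hadjσ : ∀ v ∈ l, G.Adj v (σ v) := by
    intro v hv
    rw [hσl v hv]
    have hidx : l.idxOf v < n := List.idxOf_lt_length_iff.mpr hv
    have := hadj (l.idxOf v) hidx
    rwa [List.getElem_idxOf hidx] at this
  have hmodinj : ∀ i j : ℕ, i < n → j < n → (i+1) % n = (j+1) % n → i = j := by
    intro i j hi hj h
    by_cases h1 : i + 1 = n <;> by_cases h2 : j + 1 = n
    · omega
    · rw [h1, Nat.mod_self, Nat.mod_eq_of_lt (by omega)] at h; omega
    · rw [h2, Nat.mod_self, Nat.mod_eq_of_lt (by omega)] at h; omega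
    · rw [Nat.mod_eq_of_lt (by omega), Nat.mod_eq_of_lt (by omega)] at h; omega
  have hσinj : Set.InjOn σ S := by
    intro a ha b hb h
    have hal : a ∈ l := hsub ha
    have hbl : b ∈ l := hsub hb
    rw [hσl a hal, hσl b hbl] at h
    have hia : l.idxOf a < n := List.idxOf_lt_length_iff.mpr hal
    have hib : l.idxOf b < n := List.idxOf_lt_length_iff.mpr hbl
    have := hmodinj _ _ hia hib ((hnd.getElem_inj_iff).mp h)
    have h2 : l[l.idxOf a]'hia = l[l.idxOf b]'hib := by congr 1
    rwa [List.getElem_idxOf hia, List.getElem_idxOf hib] at h2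
  have hσS : σ '' S ⊆ {v | v ∈ l} \ S := by
    rintro _ ⟨v, hv, rfl⟩
    have hvl : v ∈ l := hsub hv
    constructor
    · rw [hσl v hvl]
      exact List.getElem_mem _
    · intro hσvS
      have hadjv := hadjσ v hvl
      exact hS hv hσvS (G.ne_of_adj hadjv) hadjv
  have h1 : S.ncard = (σ '' S).ncard := (Set.ncard_image_of_injOn hσinj).symm
  have h2 : (σ '' S).ncard ≤ ({v | v ∈ l} \ S).ncard :=
    Set.ncard_le_ncard hσS (Set.toFinite _)
  have h3 : ({v | v ∈ l} \ S).ncard = {v | v ∈ l}.ncard - S.ncard :=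
    Set.ncard_diff hsub (Set.toFinite _)
  have h4 : {v | v ∈ l}.ncard = n := by
    have he : {v | v ∈ l} = ↑l.toFinset := by ext v; simp
    rw [he, Set.ncard_coe_finset, List.toFinset_card_of_nodup hnd]
  have h5 : S.ncard ≤ {v | v ∈ l}.ncard := Set.ncard_le_ncard hsub (Set.toFinite _)
  omega

theorem stmt_3 [Fintype V] (G : SimpleGraph V) :
    (∀ X : Set V, KonigEgervary (G.induce X)) ↔ G.Colorable 2 := by
  classical
  constructor
  · intro hKE
    by_contra hncol
    have hex : ∃ (u : V) (w : G.Walk u u), Odd w.length := by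
      by_contra hcon
      push_neg at hcon
      exact hncol (colorable_of_no_odd_closed_walk G hcon)
    obtain ⟨x, w, hodd, hnd⟩ := exists_nodup_odd_closed_walk G hex
    have hpos : 0 < w.length := by
      rcases hodd with ⟨k, hk⟩
      omega
    obtain ⟨l, hlnd, hllen, hladj⟩ := cycle_list_of_closed_walk w hnd hpos
    have hlpos : 0 < l.length := by omega
    set X : Set V := {v | v ∈ l} with hX
    have hKEX := hKE X
    rw [KonigEgervary] at hKEX
    have hXcard : Nat.card ↥X = l.length := by
      rw [Nat.card_coe_set_eq]
      have he : X = ↑l.toFinset := by ext v; simp [hX]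
      rw [he, Set.ncard_coe_finset, List.toFinset_card_of_nodup hlnd]
    obtain ⟨M, hM, hMc⟩ := mu_spec (G.induce X)
    have hmu2 : 2 * muNum (G.induce X) ≤ l.length := by
      have h := two_mul_ncard_edgeSet_le hM
      rw [hMc, hXcard] at h
      exact h
    obtain ⟨S', hS', hS'c⟩ := alpha_spec (G.induce X)
    have hSind : IsIndep G (Subtype.val '' S') := by
      rintro _ ⟨a, ha, rfl⟩ _ ⟨b, hb, rfl⟩ hne hadj
      refine hS' ha hb (fun h => hne (congrArg _ h)) ?_
      exact hadj
    have hSsub : Subtype.val '' S' ⊆ {v | v ∈ l} := by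
      rintro _ ⟨a, ha, rfl⟩
      exact a.2
    have halpha2 : 2 * alphaNum (G.induce X) ≤ l.length := by
      have h := indep_le_of_cycle_list G l hlnd hlpos hladj hSind hSsub
      rwa [Set.ncard_image_of_injective _ Subtype.val_injective, hS'c] at h
    have hoddl : l.length % 2 = 1 := by
      rw [hllen]
      rcases hodd with ⟨k, hk⟩
      omega
    rw [hXcard] at hKEX
    omega
  · intro hcol X
    have hcolX : (G.induce X).Colorable 2 := by
      obtain ⟨c⟩ := hcol
      exact ⟨Coloring.mk (fun v => c v.val) (fun hadj => c.valid hadj)⟩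
    obtain ⟨c2⟩ := hcolX
    have cB : (G.induce X).Coloring Bool := recolorOfEquiv (G.induce X) finTwoEquiv c2
    rw [KonigEgervary]
    exact le_antisymm (alpha_mu_le _) (bipartite_lower _ cB)
end

section
/- If A is a critical independent set of a graph G and X = A ∪ N(A), then μ(G) = μ(G[X]) + μ(G - X); in particular, every maximum matching of G[X] extends to a maximum matching of G. -/
open SimpleGraph

variable {V : Type*}

lemma indep_not_mem_nbhd {G : SimpleGraph V} {A : Set V} (hA : IsIndep G A) {a : V}
    (ha : a ∈ A) : a ∉ nbhd G A := by
  rintro ⟨b, hb, hadj⟩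
  rcases eq_or_ne b a with rfl | hne
  · exact G.irrefl hadj
  · exact hA hb ha hne hadj

lemma muNum_bddAbove (H : SimpleGraph W) [Finite W] :
    BddAbove {n | ∃ M : H.Subgraph, M.IsMatching ∧ M.edgeSet.ncard = n} := by
  refine ⟨Nat.card (Sym2 W), ?_⟩
  rintro n ⟨M, _, rfl⟩
  have := Set.ncard_le_ncard (Set.subset_univ M.edgeSet) Set.finite_univ
  simpa [Set.ncard_univ] using this

lemma le_muNum {H : SimpleGraph W} [Finite W] {M : H.Subgraph} (hM : M.IsMatching) :
    M.edgeSet.ncard ≤ muNum H :=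
  le_csSup (muNum_bddAbove H) ⟨M, hM, rfl⟩

lemma exists_muNum_matching (H : SimpleGraph W) [Finite W] :
    ∃ M : H.Subgraph, M.IsMatching ∧ M.edgeSet.ncard = muNum H := by
  have h0 : (0 : ℕ) ∈ {n | ∃ M : H.Subgraph, M.IsMatching ∧ M.edgeSet.ncard = n} := by
    refine ⟨⊥, ?_, by simp [Subgraph.edgeSet_bot]⟩
    intro v hv
    simp [Subgraph.verts_bot] at hv
  exact Nat.sSup_mem ⟨0, h0⟩ (muNum_bddAbove H)

lemma diffSet_le_critDiff [Finite V] {G : SimpleGraph V} {I : Set V} (hI : IsIndep G I) :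
    diffSet G I ≤ critDiff G := by
  refine le_csSup ⟨(Nat.card V : ℤ), ?_⟩ ⟨I, hI, rfl⟩
  rintro d ⟨J, _, rfl⟩
  have h1 : J.ncard ≤ Nat.card V := by
    have := Set.ncard_le_ncard (Set.subset_univ J) Set.finite_univ
    simpa [Set.ncard_univ] using this
  have h2 : (0 : ℤ) ≤ ((nbhd G J).ncard : ℤ) := by positivity
  unfold diffSet
  omega

lemma subgraph_edgeSet_map {G : SimpleGraph V} {H : SimpleGraph W} (f : G →g H)
    (M : G.Subgraph) : (M.map f).edgeSet = Sym2.map f '' M.edgeSet := by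
  ext e
  induction e with
  | _ u v =>
    simp only [Subgraph.mem_edgeSet, Subgraph.map_adj, Relation.Map, Set.mem_image]
    constructor
    · rintro ⟨a, b, hab, rfl, rfl⟩
      exact ⟨s(a, b), hab, rfl⟩
    · rintro ⟨e, he, hmap⟩
      induction e with
      | _ a b =>
        rw [Sym2.map_pair_eq, Sym2.eq_iff] at hmap
        have he' := Subgraph.mem_edgeSet.mp he
        rcases hmap with ⟨rfl, rfl⟩ | ⟨rfl, rfl⟩
        · exact ⟨a, b, he', rfl, rfl⟩
        · exact ⟨b, a, he'.symm, rfl, rfl⟩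
lemma hall_step [Finite V] {G : SimpleGraph V} {A : Set V} (hA : IsCriticalIndep G A) :
    ∃ f : ↥(nbhd G A) → V, Function.Injective f ∧ ∀ v, f v ∈ A ∧ G.Adj ↑v (f v) := by
  classical
  obtain ⟨hInd, hCrit⟩ := hA
  set t : ↥(nbhd G A) → Finset V :=
    fun v => (Set.toFinite {a | a ∈ A ∧ G.Adj ↑v a}).toFinset with ht
  have hall : ∀ s : Finset ↥(nbhd G A), s.card ≤ (s.biUnion t).card := by
    intro s
    by_contra hcon
    push_neg at hcon
    set S : Set V := Subtype.val '' (↑s : Set ↥(nbhd G A)) with hS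
    have hSsub : S ⊆ nbhd G A := by
      rintro _ ⟨v, _, rfl⟩; exact v.2
    -- identify the biUnion with A ∩ nbhd G S
    have hbi : (↑(s.biUnion t) : Set V) = A ∩ nbhd G S := by
      ext a
      simp only [Finset.coe_biUnion, Set.mem_iUnion, Finset.mem_coe, Set.Finite.mem_toFinset,
        Set.mem_setOf_eq, Set.mem_inter_iff, ht, hS]
      constructor
      · rintro ⟨v, hv, ha, hadj⟩
        exact ⟨ha, ⟨↑v, ⟨v, hv, rfl⟩, hadj⟩⟩
      · rintro ⟨ha, ⟨b, ⟨v, hv, rfl⟩, hadj⟩⟩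
        exact ⟨v, hv, ha, hadj⟩
    set A' : Set V := A \ nbhd G S with hA'
    have hIndA' : IsIndep G A' := hInd.mono Set.diff_subset
    have hNA' : nbhd G A' ⊆ nbhd G A \ S := by
      rintro x ⟨a, ha, hadj⟩
      refine ⟨⟨a, ha.1, hadj⟩, fun hxS => ha.2 ⟨x, hxS, hadj.symm⟩⟩
    -- cardinal facts
    have hScard : S.ncard = s.card := by
      rw [hS, Set.ncard_image_of_injective _ Subtype.val_injective, Set.ncard_coe_finset]
    have hbicard : (A ∩ nbhd G S).ncard = (s.biUnion t).card := by
      rw [← hbi, Set.ncard_coe_finset]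
    have hA'card : A'.ncard + (A ∩ nbhd G S).ncard = A.ncard := by
      have : A' = A \ (A ∩ nbhd G S) := by
        rw [hA']; ext x; simp only [Set.mem_diff, Set.mem_inter_iff]; tauto
      rw [this]
      exact Set.ncard_diff_add_ncard_of_subset Set.inter_subset_left (Set.toFinite A)
    have hNcard : (nbhd G A').ncard ≤ (nbhd G A \ S).ncard :=
      Set.ncard_le_ncard hNA' ((Set.toFinite _).diff)
    have hNdiff : (nbhd G A \ S).ncard + S.ncard = (nbhd G A).ncard :=
      Set.ncard_diff_add_ncard_of_subset hSsub (Set.toFinite _)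
    have hle : diffSet G A' ≤ diffSet G A := hCrit ▸ diffSet_le_critDiff hIndA'
    unfold diffSet at hle
    omega
  obtain ⟨f, hfinj, hf⟩ := (Finset.all_card_le_biUnion_card_iff_existsInjective' t).mp hall
  refine ⟨f, hfinj, fun v => ?_⟩
  have := hf v
  rw [ht, Set.Finite.mem_toFinset] at this
  exact ⟨this.1, this.2⟩
lemma matching_edge_eq_s8 {H : SimpleGraph W} {M : H.Subgraph} (hM : M.IsMatching)
    {e₁ e₂ : Sym2 W} (h₁ : e₁ ∈ M.edgeSet) (h₂ : e₂ ∈ M.edgeSet) {v : W}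
    (hv₁ : v ∈ e₁) (hv₂ : v ∈ e₂) : e₁ = e₂ := by
  have key : ∀ e ∈ M.edgeSet, v ∈ e → ∃ o, e = s(v, o) ∧ M.Adj v o := by
    intro e he hve
    induction e with
    | _ a b =>
      have hab := Subgraph.mem_edgeSet.mp he
      rcases Sym2.mem_iff.mp hve with rfl | rfl
      · exact ⟨b, rfl, hab⟩
      · exact ⟨a, Sym2.eq_swap, hab.symm⟩
  obtain ⟨o₁, he₁, hadj₁⟩ := key e₁ h₁ hv₁
  obtain ⟨o₂, he₂, hadj₂⟩ := key e₂ h₂ hv₂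
  obtain ⟨w, -, hw⟩ := hM (M.edge_vert hadj₁)
  rw [he₁, he₂, hw o₁ hadj₁, hw o₂ hadj₂]

lemma muX_ge [Finite V] {G : SimpleGraph V} {A : Set V} (hA : IsCriticalIndep G A) :
    (nbhd G A).ncard ≤ muNum (G.induce (A ∪ nbhd G A)) := by
  obtain ⟨f, hfinj, hf⟩ := hall_step hA
  set X := A ∪ nbhd G A with hX
  have hAX : A ⊆ X := Set.subset_union_left
  have hNX : nbhd G A ⊆ X := Set.subset_union_right
  have hAnotN : ∀ a ∈ A, a ∉ nbhd G A := fun a ha => indep_not_mem_nbhd hA.1 ha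
  let MX : (G.induce X).Subgraph :=
    { verts := {x : ↥X | ↑x ∈ nbhd G A ∨ ∃ w : ↥(nbhd G A), ↑x = f w}
      Adj := fun u v => (∃ h : ↑u ∈ nbhd G A, ↑v = f ⟨↑u, h⟩) ∨
        (∃ h : ↑v ∈ nbhd G A, ↑u = f ⟨↑v, h⟩)
      adj_sub := by
        rintro u v (⟨h, hv⟩ | ⟨h, hu⟩)
        · show G.Adj ↑u ↑v
          rw [hv]
          exact (hf ⟨↑u, h⟩).2
        · show G.Adj ↑u ↑v
          rw [hu]
          exact ((hf ⟨↑v, h⟩).2).symm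
      edge_vert := by
        rintro u v (⟨h, hv⟩ | ⟨h, hu⟩)
        · exact Or.inl h
        · exact Or.inr ⟨⟨↑v, h⟩, hu⟩
      symm := by
        constructor; rintro u v (h | h)
        · exact Or.inr h
        · exact Or.inl h }
  have hmatch : MX.IsMatching := by
    rintro x (hx | ⟨w, hw⟩)
    · refine ⟨⟨f ⟨↑x, hx⟩, hAX (hf ⟨↑x, hx⟩).1⟩, Or.inl ⟨hx, rfl⟩, ?_⟩
      rintro y (⟨h, hy⟩ | ⟨h, hx'⟩)
      · exact Subtype.ext hy
      · exact absurd hx (by rw [hx']; exact hAnotN _ (hf ⟨↑y, h⟩).1)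
    · refine ⟨⟨↑w, hNX w.2⟩, Or.inr ⟨w.2, hw⟩, ?_⟩
      rintro y (⟨h, hy⟩ | ⟨h, hx'⟩)
      · exact absurd h (by rw [hw]; exact hAnotN _ (hf w).1)
      · have h2 : (⟨↑y, h⟩ : ↥(nbhd G A)) = w := hfinj (by rw [← hx']; exact hw)
        have h3 : (↑y : V) = ↑w := congrArg Subtype.val h2
        exact Subtype.ext h3
  have hcount : MX.edgeSet.ncard = (nbhd G A).ncard := by
    have hrange : MX.edgeSet =
        Set.range (fun v : ↥(nbhd G A) => s((⟨↑v, hNX v.2⟩ : ↥X), ⟨f v, hAX (hf v).1⟩)) := by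
      ext e
      induction e with
      | _ u v =>
        simp only [Subgraph.mem_edgeSet, Set.mem_range]
        constructor
        · rintro (⟨h, hv⟩ | ⟨h, hu⟩)
          · exact ⟨⟨↑u, h⟩, by rw [Sym2.eq_iff]; exact Or.inl ⟨rfl, Subtype.ext hv.symm⟩⟩
          · exact ⟨⟨↑v, h⟩, by rw [Sym2.eq_iff]; exact Or.inr ⟨rfl, Subtype.ext hu.symm⟩⟩
        · rintro ⟨w, hw⟩
          rw [Sym2.eq_iff] at hw
          rcases hw with ⟨hu, hv⟩ | ⟨hu, hv⟩
          · subst hu; subst hv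
            exact Or.inl ⟨w.2, rfl⟩
          · subst hu; subst hv
            exact Or.inr ⟨w.2, rfl⟩
    have hinj : Function.Injective
        (fun v : ↥(nbhd G A) => s((⟨↑v, hNX v.2⟩ : ↥X), ⟨f v, hAX (hf v).1⟩)) := by
      intro v₁ v₂ h
      simp only [Sym2.eq_iff] at h
      rcases h with ⟨h1, h2⟩ | ⟨h1, h2⟩
      · have h3 : (↑v₁ : V) = ↑v₂ := congrArg (Subtype.val : ↥X → V) h1
        exact Subtype.ext h3
      · exfalso
        have h3 : (↑v₁ : V) = f v₂ := congrArg (Subtype.val : ↥X → V) h1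
        exact hAnotN _ (h3 ▸ (hf v₂).1) v₁.2
    rw [hrange, ← Set.image_univ, Set.ncard_image_of_injective _ hinj, Set.ncard_univ,
      Nat.card_coe_set_eq]
  calc (nbhd G A).ncard = MX.edgeSet.ncard := hcount.symm
    _ ≤ muNum (G.induce X) := le_muNum hmatch
lemma combine [Finite V] (G : SimpleGraph V) (X : Set V)
    {M1 : (G.induce X).Subgraph} (h1 : M1.IsMatching)
    {M2 : (G.induce Xᶜ).Subgraph} (h2 : M2.IsMatching) :
    ∃ M' : G.Subgraph, M'.IsMatching ∧
      M'.edgeSet.ncard = M1.edgeSet.ncard + M2.edgeSet.ncard ∧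
      Sym2.map Subtype.val '' M1.edgeSet ⊆ M'.edgeSet := by
  let f1 : G.induce X →g G := (SimpleGraph.Embedding.induce X).toHom
  let f2 : G.induce Xᶜ →g G := (SimpleGraph.Embedding.induce Xᶜ).toHom
  have hf1 : ⇑f1 = (Subtype.val : ↥X → V) := rfl
  have hf2 : ⇑f2 = (Subtype.val : ↥Xᶜ → V) := rfl
  have inj1 : Function.Injective f1 := hf1 ▸ Subtype.val_injective
  have inj2 : Function.Injective f2 := hf2 ▸ Subtype.val_injective
  have hm1 : (M1.map f1).IsMatching := h1.map f1 inj1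
  have hm2 : (M2.map f2).IsMatching := h2.map f2 inj2
  have hverts1 : (M1.map f1).verts ⊆ X := by
    rintro x ⟨v, -, rfl⟩; exact v.2
  have hverts2 : (M2.map f2).verts ⊆ Xᶜ := by
    rintro x ⟨v, -, rfl⟩; exact v.2
  have hdisj : Disjoint (M1.map f1).support (M2.map f2).support := by
    rw [hm1.support_eq_verts, hm2.support_eq_verts]
    exact Set.disjoint_of_subset hverts1 hverts2 disjoint_compl_right
  have he1 : (M1.map f1).edgeSet = Sym2.map Subtype.val '' M1.edgeSet := by
    rw [subgraph_edgeSet_map, hf1]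
  have he2 : (M2.map f2).edgeSet = Sym2.map Subtype.val '' M2.edgeSet := by
    rw [subgraph_edgeSet_map, hf2]
  have hedisj : Disjoint (M1.map f1).edgeSet (M2.map f2).edgeSet := by
    rw [Set.disjoint_left]
    intro e he1' he2'
    rw [he1] at he1'
    rw [he2] at he2'
    obtain ⟨e', -, rfl⟩ := he1'
    obtain ⟨e'', -, heq⟩ := he2'
    induction e'' with
    | _ c d =>
      have hc : (↑c : V) ∈ Sym2.map Subtype.val e' := by
        rw [← heq, Sym2.map_pair_eq]; exact Sym2.mem_mk_left _ _
      obtain ⟨b, -, hb⟩ := Sym2.mem_map.mp hc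
      exact c.2 (hb ▸ b.2)
  refine ⟨M1.map f1 ⊔ M2.map f2, hm1.sup hm2 hdisj, ?_, ?_⟩
  · rw [Subgraph.edgeSet_sup,
      Set.ncard_union_eq hedisj (Set.toFinite _) (Set.toFinite _), he1, he2,
      Set.ncard_image_of_injective _ (Sym2.map.injective Subtype.val_injective),
      Set.ncard_image_of_injective _ (Sym2.map.injective Subtype.val_injective)]
  · rw [Subgraph.edgeSet_sup, ← he1]
    exact Set.subset_union_left

lemma muG_le [Finite V] {G : SimpleGraph V} {A : Set V} (hA : IsCriticalIndep G A) :
    muNum G ≤ (nbhd G A).ncard + muNum (G.induce (A ∪ nbhd G A)ᶜ) := by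
  classical
  obtain ⟨M, hM, hcard⟩ := exists_muNum_matching G
  set X := A ∪ nbhd G A with hX
  set S1 := {e ∈ M.edgeSet | ∃ v, v ∈ nbhd G A ∧ v ∈ e} with hS1
  have hS1sub : S1 ⊆ M.edgeSet := Set.sep_subset _ _
  let pick : Sym2 V → V := fun e =>
    if h : ∃ v, v ∈ nbhd G A ∧ v ∈ e then h.choose else e.out.1
  have hpick : ∀ e, (∃ v, v ∈ nbhd G A ∧ v ∈ e) →
      pick e ∈ nbhd G A ∧ pick e ∈ e := by
    intro e h
    simp only [pick, dif_pos h]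
    exact h.choose_spec
  have hS1card : S1.ncard ≤ (nbhd G A).ncard := by
    apply Set.ncard_le_ncard_of_injOn pick
    · intro e he
      exact (hpick e he.2).1
    · intro e₁ h₁ e₂ h₂ heq
      exact matching_edge_eq_s8 hM h₁.1 h₂.1 (hpick e₁ h₁.2).2 (heq ▸ (hpick e₂ h₂.2).2)
  -- edges outside S1 lie in Xᶜ
  have hS2X : ∀ a b : V, M.Adj a b → s(a, b) ∉ S1 → a ∈ Xᶜ := by
    intro a b hab hnot
    intro haX
    rcases haX with haA | haN
    · exact hnot ⟨hab, b, ⟨a, haA, M.adj_sub hab⟩, Sym2.mem_mk_right a b⟩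
    · exact hnot ⟨hab, a, haN, Sym2.mem_mk_left a b⟩
  let N2 : (G.induce Xᶜ).Subgraph :=
    { verts := {v : ↥Xᶜ | ∃ w : ↥Xᶜ, M.Adj ↑v ↑w}
      Adj := fun u v => M.Adj ↑u ↑v
      adj_sub := fun h => M.adj_sub h
      edge_vert := fun {u v} h => ⟨v, h⟩
      symm := ⟨fun u v h => M.adj_symm h⟩ }
  have hN2 : N2.IsMatching := by
    rintro v ⟨w, hw⟩
    obtain ⟨w0, hw0, huniq⟩ := hM (M.edge_vert hw)
    refine ⟨w, hw, fun y hy => ?_⟩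
    have e1 : (↑y : V) = w0 := huniq _ hy
    have e2 : (↑w : V) = w0 := huniq _ hw
    exact Subtype.ext (e1.trans e2.symm)
  have himg : Sym2.map (Subtype.val : ↥Xᶜ → V) '' N2.edgeSet = M.edgeSet \ S1 := by
    ext e
    constructor
    · rintro ⟨e', he', rfl⟩
      induction e' with
      | _ u v =>
        have hadj : M.Adj ↑u ↑v := Subgraph.mem_edgeSet.mp he'
        refine ⟨Subgraph.mem_edgeSet.mpr hadj, ?_⟩
        rintro ⟨-, v0, hv0N, hv0e⟩
        have : v0 ∈ X := Set.subset_union_right hv0N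
        rcases Sym2.mem_iff.mp hv0e with rfl | rfl
        · exact u.2 this
        · exact v.2 this
    · rintro ⟨heM, hnot⟩
      induction e with
      | _ a b =>
        have hab : M.Adj a b := Subgraph.mem_edgeSet.mp heM
        have ha : a ∈ Xᶜ := hS2X a b hab hnot
        have hb : b ∈ Xᶜ := hS2X b a hab.symm (by rwa [Sym2.eq_swap])
        exact ⟨s((⟨a, ha⟩ : ↥Xᶜ), ⟨b, hb⟩), Subgraph.mem_edgeSet.mpr hab, rfl⟩
  have hS2card : (M.edgeSet \ S1).ncard = N2.edgeSet.ncard := by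
    rw [← himg, Set.ncard_image_of_injective _ (Sym2.map.injective Subtype.val_injective)]
  have hsplit : (M.edgeSet \ S1).ncard + S1.ncard = M.edgeSet.ncard :=
    Set.ncard_diff_add_ncard_of_subset hS1sub (Set.toFinite _)
  have hle2 : N2.edgeSet.ncard ≤ muNum (G.induce Xᶜ) := le_muNum hN2
  omega

lemma muG_ge_combine [Finite V] (G : SimpleGraph V) (X : Set V) :
    muNum (G.induce X) + muNum (G.induce Xᶜ) ≤ muNum G := by
  obtain ⟨M1, h1, hc1⟩ := exists_muNum_matching (G.induce X)
  obtain ⟨M2, h2, hc2⟩ := exists_muNum_matching (G.induce Xᶜ)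
  obtain ⟨M', hM', hcard, -⟩ := combine G X h1 h2
  rw [← hc1, ← hc2, ← hcard]
  exact le_muNum hM'

theorem stmt_8 [Fintype V] (G : SimpleGraph V) (A : Set V)
    (hA : IsCriticalIndep G A) :
    muNum G = muNum (G.induce (A ∪ nbhd G A)) + muNum (G.induce (A ∪ nbhd G A)ᶜ) ∧
    ∀ M : SimpleGraph.Subgraph (G.induce (A ∪ nbhd G A)),
      M.IsMatching → M.edgeSet.ncard = muNum (G.induce (A ∪ nbhd G A)) →
      ∃ M' : SimpleGraph.Subgraph G, M'.IsMatching ∧ M'.edgeSet.ncard = muNum G ∧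
        Sym2.map (Subtype.val) '' M.edgeSet ⊆ M'.edgeSet := by
  set X := A ∪ nbhd G A with hX
  have h1 : muNum (G.induce X) + muNum (G.induce Xᶜ) ≤ muNum G := muG_ge_combine G X
  have h2 : muNum G ≤ (nbhd G A).ncard + muNum (G.induce Xᶜ) := muG_le hA
  have h3 : (nbhd G A).ncard ≤ muNum (G.induce X) := muX_ge hA
  have heq : muNum G = muNum (G.induce X) + muNum (G.induce Xᶜ) := by omega
  refine ⟨heq, ?_⟩
  intro M hMmatch hMcard
  obtain ⟨M2, hM2, hc2⟩ := exists_muNum_matching (G.induce Xᶜ)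
  obtain ⟨M', hM', hcard, hsub⟩ := combine G X hMmatch hM2
  exact ⟨M', hM', by omega, hsub⟩
end
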